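/- An n × n matrix A over T with all entries ⪯ 0^ν, each of whose columns contains at least one entry equal to 0^ν, is tropically singular (i.e., |A| ∈ U ∪ {-∞}). -/

import Mathlib

/-- The extended tropical semiring `T = ℝ ∪ ℝ^ν ∪ {-∞}`:
`bot` is `-∞`, `real a` is the real element `a`, `ghost a` is `a^ν`. -/
inductive T : Type where
  | bot : T
  | real : ℝ → T
  | ghost : ℝ → T

namespace T

noncomputable section

/-- Tropical addition `⊕` (max with respect to `-∞ ≺ a ≺ a^ν`, ties become ghosts). -/
def add : T → T → T
  | bot, y => y
  | real a, bot => real a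
  | ghost a, bot => ghost a
  | real a, real b => if a < b then real b else if b < a then real a else ghost a
  | real a, ghost b => if b < a then real a else ghost b
  | ghost a, real b => if a < b then real b else ghost a
  | ghost a, ghost b => ghost (max a b)

/-- Tropical multiplication `⊙` (addition of underlying reals, ghosts absorb). -/
def mul : T → T → T
  | bot, _ => bot
  | real _, bot => bot
  | ghost _, bot => bot
  | real a, real b => real (a + b)
  | real a, ghost b => ghost (a + b)
  | ghost a, real b => ghost (a + b)
  | ghost a, ghost b => ghost (a + b)

/-- The total order `⪯` on `T`: `-∞` least, order of reals, `a ≺ a^ν`. -/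
def le : T → T → Prop
  | bot, _ => True
  | real _, bot => False
  | real a, real b => a ≤ b
  | real a, ghost b => a ≤ b
  | ghost _, bot => False
  | ghost a, real b => a < b
  | ghost a, ghost b => a ≤ b

/-- Membership in the ghost ideal `U̅ = U ∪ {-∞}`. -/
def IsGhost : T → Prop
  | bot => True
  | real _ => False
  | ghost _ => True

/-- Membership in `ℝ ∪ {-∞}` (non-ghost elements). -/
def RealOrBot : T → Prop
  | bot => True
  | real _ => True
  | ghost _ => False

/-- The ghost map `ν`. -/
def nu : T → T
  | bot => bot
  | real a => ghost a
  | ghost a => ghost a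

/-- Tropical sum of a list. -/
def sumList : List T → T := fun l => l.foldr add bot

/-- Tropical sum over a finite index set. -/
def sum {α : Type*} (s : Finset α) (f : α → T) : T := sumList (s.toList.map f)

/-- Tropical product of a list. -/
def prodList : List T → T := fun l => l.foldr mul (real 0)

/-- The weight of a permutation `σ` in a matrix: `a_{1,σ(1)} ⊙ ⋯ ⊙ a_{n,σ(n)}`. -/
def permProd {n : ℕ} (A : Matrix (Fin n) (Fin n) T) (σ : Equiv.Perm (Fin n)) : T :=
  prodList ((List.finRange n).map fun i => A i (σ i))

/-- The tropical determinant (permanent) `|A| = ⨁_σ a_{1,σ(1)} ⊙ ⋯ ⊙ a_{n,σ(n)}`. -/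
def det {n : ℕ} (A : Matrix (Fin n) (Fin n) T) : T :=
  sum (Finset.univ : Finset (Equiv.Perm (Fin n))) (fun σ => permProd A σ)

/-- Tropical dependence of a family of `m` vectors in `T^(n)`:
some tropical linear combination with coefficients in `ℝ ∪ {-∞}`, not all `-∞`,
lands in the ghost part `U̅^(n)`. -/
def Dependent {m n : ℕ} (v : Fin m → Fin n → T) : Prop :=
  ∃ α : Fin m → T, (∀ i, RealOrBot (α i)) ∧ (∃ i, α i ≠ bot) ∧
    ∀ j, IsGhost (sum Finset.univ fun i => mul (α i) (v i j))

/-- The tropical rank: maximal number of tropically independent rows. -/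
def rk {m n : ℕ} (A : Matrix (Fin m) (Fin n) T) : ℕ :=
  sSup {k | ∃ f : Fin k → Fin m, Function.Injective f ∧ ¬ Dependent (fun i => A (f i))}

end

end T


namespace T

noncomputable def toVal : T → WithBot ℝ
  | bot => ⊥
  | real a => (a : WithBot ℝ)
  | ghost a => (a : WithBot ℝ)

@[simp] lemma toVal_bot : toVal bot = ⊥ := rfl
@[simp] lemma toVal_real (a : ℝ) : toVal (real a) = (a : WithBot ℝ) := rfl
@[simp] lemma toVal_ghost (a : ℝ) : toVal (ghost a) = (a : WithBot ℝ) := rfl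

lemma toVal_add (x y : T) : toVal (add x y) = max (toVal x) (toVal y) := by
  cases x <;> cases y <;>
    simp only [add, toVal_bot, toVal_real, toVal_ghost, max_bot_left, max_bot_right] <;>
    (try split_ifs) <;>
    simp_all [max_def, WithBot.coe_le_coe] <;>
    (try split_ifs) <;> (try rfl) <;> (try intro) <;> norm_cast <;> linarith

lemma toVal_mul (x y : T) : toVal (mul x y) = toVal x + toVal y := by
  cases x <;> cases y <;> simp [mul] <;> norm_cast

lemma isGhost_add (x y : T) (hx : IsGhost x) (hxy : toVal y ≤ toVal x) :
    IsGhost (add x y) ∧ IsGhost (add y x) := by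
  cases x <;> cases y <;>
    simp_all [add, IsGhost, WithBot.coe_le_coe] <;> split_ifs <;>
    simp_all [IsGhost] <;> linarith


lemma toVal_le_sumList {l : List T} {x : T} (hx : x ∈ l) :
    toVal x ≤ toVal (sumList l) := by
  induction l with
  | nil => simp at hx
  | cons a t ih =>
      have : sumList (a :: t) = add a (sumList t) := rfl
      rw [this, toVal_add]
      rcases List.mem_cons.1 hx with h | h
      · subst h; exact le_max_left _ _
      · exact le_trans (ih h) (le_max_right _ _)

lemma sumList_le {l : List T} {v : WithBot ℝ} (h : ∀ x ∈ l, toVal x ≤ v) :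
    toVal (sumList l) ≤ v := by
  induction l with
  | nil => simp [sumList]
  | cons a t ih =>
      have e : sumList (a :: t) = add a (sumList t) := rfl
      rw [e, toVal_add, max_le_iff]
      exact ⟨h a List.mem_cons_self, ih fun x hx => h x (List.mem_cons_of_mem a hx)⟩

lemma isGhost_sumList {l : List T} {x : T} (hx : x ∈ l) (hg : IsGhost x)
    (hmax : ∀ y ∈ l, toVal y ≤ toVal x) : IsGhost (sumList l) := by
  induction l with
  | nil => simp at hx
  | cons a t ih =>
      have e : sumList (a :: t) = add a (sumList t) := rfl
      rw [e]
      rcases List.mem_cons.1 hx with h | h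
      · subst h
        exact (isGhost_add _ _ hg (sumList_le fun y hy =>
          hmax y (List.mem_cons_of_mem _ hy))).1
      · have hgt : IsGhost (sumList t) :=
          ih h fun y hy => hmax y (List.mem_cons_of_mem _ hy)
        have hle2 : toVal a ≤ toVal (sumList t) :=
          le_trans (hmax a List.mem_cons_self) (toVal_le_sumList h)
        exact (isGhost_add _ _ hgt hle2).2

lemma isGhost_mul (x y : T) (h : IsGhost x ∨ IsGhost y) : IsGhost (mul x y) := by
  cases x <;> cases y <;> simp_all [mul, IsGhost]

lemma isGhost_prodList {l : List T} {x : T} (hx : x ∈ l) (hg : IsGhost x) :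
    IsGhost (prodList l) := by
  induction l with
  | nil => simp at hx
  | cons a t ih =>
      have e : prodList (a :: t) = mul a (prodList t) := rfl
      rw [e]
      rcases List.mem_cons.1 hx with h | h
      · subst h; exact isGhost_mul _ _ (Or.inl hg)
      · exact isGhost_mul _ _ (Or.inr (ih h))

lemma toVal_prodList (l : List T) : toVal (prodList l) = (l.map toVal).sum := by
  induction l with
  | nil => simp [prodList]
  | cons a t ih =>
      have e : prodList (a :: t) = mul a (prodList t) := rfl
      rw [e, toVal_mul, ih]; simp

lemma toVal_permProd {n : ℕ} (A : Matrix (Fin n) (Fin n) T) (σ : Equiv.Perm (Fin n)) :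
    toVal (permProd A σ) = ((List.finRange n).map fun i => toVal (A i (σ i))).sum := by
  rw [permProd, toVal_prodList, List.map_map]; rfl


lemma toVal_le_zero {x : T} (h : le x (ghost 0)) : toVal x ≤ (0 : WithBot ℝ) := by
  cases x <;> simp_all [le] <;> exact_mod_cast h

lemma exists_periodic {N : ℕ} (f : Fin (N + 1) → Fin (N + 1)) :
    ∃ (y : Fin (N + 1)) (m : ℕ), 0 < m ∧ f^[m] y = y := by
  obtain ⟨a, b, hab, he⟩ := Fintype.exists_ne_map_eq_of_card_lt
    (fun t : Fin (N + 2) => f^[(t : ℕ)] 0) (by simp)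
  rcases lt_or_gt_of_ne hab with h | h
  · refine ⟨f^[(a : ℕ)] 0, (b : ℕ) - (a : ℕ), by omega, ?_⟩
    rw [← Function.iterate_add_apply]
    have : (b : ℕ) - (a : ℕ) + (a : ℕ) = (b : ℕ) := by omega
    rw [this, ← he]
  · refine ⟨f^[(b : ℕ)] 0, (a : ℕ) - (b : ℕ), by omega, ?_⟩
    rw [← Function.iterate_add_apply]
    have : (a : ℕ) - (b : ℕ) + (b : ℕ) = (a : ℕ) := by omega
    rw [this, he]

end T

/-- a matrix `⪯ 0^ν` each of whose columns contains a `0^ν` entry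
is tropically singular. -/
theorem stmt10 {n : ℕ} (A : Matrix (Fin (n + 1)) (Fin (n + 1)) T)
    (hle : ∀ i j, T.le (A i j) (T.ghost 0))
    (hcol : ∀ j, ∃ i, A i j = T.ghost 0) :
    T.IsGhost (T.det A) := by
  classical
  choose r hr using hcol
  -- a permutation with maximal value
  obtain ⟨σ₀, -, hσ₀⟩ := Finset.exists_max_image
    (Finset.univ : Finset (Equiv.Perm (Fin (n + 1))))
    (fun σ => T.toVal (T.permProd A σ)) ⟨1, Finset.mem_univ 1⟩
  set f : Fin (n + 1) → Fin (n + 1) := fun i => r (σ₀ i) with hf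
  obtain ⟨y, m, hm, hy⟩ := T.exists_periodic f
  set S : Finset (Fin (n + 1)) := (Finset.range m).image (fun t => f^[t] y) with hSdef
  have hmod : ∀ j, f^[j] y = f^[j % m] y := by
    intro j
    induction j using Nat.strong_induction_on with
    | _ j ih =>
      by_cases hj : j < m
      · rw [Nat.mod_eq_of_lt hj]
      · push_neg at hj
        have h1 : j = (j - m) + m := by omega
        have h2 : f^[j] y = f^[j - m] y := by
          conv_lhs => rw [h1]
          rw [Function.iterate_add_apply, hy]
        have h3 : (j - m) % m = j % m := by
          conv_rhs => rw [Nat.mod_eq_sub_mod hj]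
        rw [h2, ih (j - m) (by omega), h3]
  have hmemS : ∀ j, f^[j] y ∈ S := by
    intro j
    rw [hmod j]
    exact Finset.mem_image.2 ⟨j % m, Finset.mem_range.2 (Nat.mod_lt _ hm), rfl⟩
  have hS_iter : ∀ x ∈ S, ∀ k, f^[k] x ∈ S := by
    intro x hx k
    obtain ⟨t, -, rfl⟩ := Finset.mem_image.1 hx
    rw [← Function.iterate_add_apply]
    exact hmemS _
  have hfix : ∀ x ∈ S, f^[m] x = x := by
    intro x hx
    obtain ⟨t, -, rfl⟩ := Finset.mem_image.1 hx
    calc f^[m] (f^[t] y) = f^[m + t] y := (Function.iterate_add_apply f m t y).symm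
      _ = f^[t + m] y := by rw [Nat.add_comm m t]
      _ = f^[t] (f^[m] y) := Function.iterate_add_apply f t m y
      _ = f^[t] y := by rw [hy]
  -- the cyclic permutation on S
  set τ : Equiv.Perm (Fin (n + 1)) :=
    { toFun := fun x => if x ∈ S then f x else x
      invFun := fun x => if x ∈ S then f^[m - 1] x else x
      left_inv := by
        intro x
        by_cases hx : x ∈ S
        · have hfx : f x ∈ S := by
            have := hS_iter x hx 1; simpa using this
          simp only [hx, if_pos, hfx]
          have : f^[m - 1] (f x) = f^[m] x := by
            have h' : f^[m - 1 + 1] x = f^[m - 1] (f x) :=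
              Function.iterate_succ_apply f (m - 1) x
            rw [← h']; congr 1; omega
          rw [this, hfix x hx]
        · simp [hx]
      right_inv := by
        intro x
        by_cases hx : x ∈ S
        · have hfx : f^[m - 1] x ∈ S := hS_iter x hx (m - 1)
          simp only [hx, if_pos, hfx]
          have : f (f^[m - 1] x) = f^[m] x := by
            have h' : f^[m - 1 + 1] x = f (f^[m - 1] x) :=
              Function.iterate_succ_apply' f (m - 1) x
            rw [← h']; congr 1; omega
          rw [this, hfix x hx]
        · simp [hx] } with hτ
  set σ' : Equiv.Perm (Fin (n + 1)) := τ.symm.trans σ₀ with hσ'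
  have hτsymm : ∀ x, τ.symm x = if x ∈ S then f^[m - 1] x else x := fun _ => rfl
  have hτapp : ∀ x, τ x = if x ∈ S then f x else x := fun _ => rfl
  have happ : ∀ i, σ' i = σ₀ (τ.symm i) := fun _ => rfl
  -- off S, σ' agrees with σ₀
  have hoff : ∀ i, i ∉ S → σ' i = σ₀ i := by
    intro i hi
    rw [happ, hτsymm, if_neg hi]
  -- on S, the entry is ghost 0
  have hon : ∀ i ∈ S, A i (σ' i) = T.ghost 0 := by
    intro i hi
    have hx : τ.symm i ∈ S := by
      rw [hτsymm, if_pos hi]; exact hS_iter i hi (m - 1)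
    have hfi : f (τ.symm i) = i := by
      have := τ.apply_symm_apply i
      rwa [hτapp, if_pos hx] at this
    have h3 : A i (σ' i) = A (f (τ.symm i)) (σ₀ (τ.symm i)) := by
      rw [hfi, happ]
    rw [h3]
    exact hr (σ₀ (τ.symm i))
  -- value comparison
  have hval : T.toVal (T.permProd A σ₀) ≤ T.toVal (T.permProd A σ') := by
    rw [T.toVal_permProd, T.toVal_permProd]
    apply List.sum_le_sum
    intro i _
    by_cases hi : i ∈ S
    · rw [hon i hi]
      simpa using T.toVal_le_zero (hle i (σ₀ i))
    · rw [hoff i hi]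
  -- the term of σ' is ghost
  have hg : T.IsGhost (T.permProd A σ') := by
    have hyS : y ∈ S := by simpa using hmemS 0
    exact T.isGhost_prodList
      (List.mem_map_of_mem (List.mem_finRange y))
      (by rw [hon y hyS]; trivial)
  -- conclude
  have hmem : T.permProd A σ' ∈ (Finset.univ.toList.map fun σ => T.permProd A σ) :=
    List.mem_map_of_mem (Finset.mem_toList.2 (Finset.mem_univ σ'))
  refine T.isGhost_sumList hmem hg ?_
  intro z hz
  obtain ⟨σ, -, rfl⟩ := List.mem_map.1 hz
  exact le_trans (hσ₀ σ (Finset.mem_univ σ)) hval
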